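/- arXiv:cond-mat/0702059 — 2 statements merged into one kernel-verified Lean document; each statement's English description precedes it below -/
import Mathlib

section
/- Let 1 ≤ a ≤ b ≤ L, let 𝐁 : [a,b] → ℝ³ be a field, and set V = Σ_{x=a}^{b} 𝐁(x)·𝐒_x. Let H^Ising_{[a,b]} = Σ_{x=a}^{b−1} h^Ising_{x,x+1} denote the Ising kink Hamiltonian on the sub-chain ⊗_{x=a}^{b} ℂ². If ψ_{[a,b]} is a ground state of H^Ising_{[a,b]} + V with lowest eigenvalue E, then ψ = |↓⟩^{⊗(a−1)} ⊗ ψ_{[a,b]} ⊗ |↑⟩^{⊗(L−b)} is an eigenvector of the full-chain Hamiltonian H^Ising + V on ℋ_L with eigenvalue E, and E is the lowest eigenvalue of H^Ising + V, i.e., ψ is a ground state of H^Ising + V. -/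
open Matrix Finset
open scoped ComplexOrder

noncomputable section

/-- Configuration space of a chain of `L` spins-1/2: `ℋ_L = ⊗_{x=1}^L ℂ²`
is identified with functions `Conf L → ℂ`. Value `0` is spin up `|↑⟩`,
value `1` is spin down `|↓⟩`. -/
abbrev Conf (L : ℕ) := Fin L → Fin 2

def S1 : Matrix (Fin 2) (Fin 2) ℂ := !![0, 1/2; 1/2, 0]
def S2 : Matrix (Fin 2) (Fin 2) ℂ := !![0, -Complex.I/2; Complex.I/2, 0]
def S3 : Matrix (Fin 2) (Fin 2) ℂ := !![1/2, 0; 0, -1/2]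

/-- The one-site operator `A` acting on the `x`-th (0-based) tensor factor of `ℋ_L`. -/
def siteOp (L : ℕ) (A : Matrix (Fin 2) (Fin 2) ℂ) (x : ℕ) :
    Matrix (Conf L) (Conf L) ℂ :=
  fun m n =>
    if hx : x < L then
      A (m ⟨x, hx⟩) (n ⟨x, hx⟩) *
        ∏ y ∈ Finset.univ.erase (⟨x, hx⟩ : Fin L), (if m y = n y then 1 else 0)
    else 0

/-- The Ising bond interaction `h^Ising_{x,x+1}` (with `x` 0-based). -/
def hIsing (L : ℕ) (x : ℕ) : Matrix (Conf L) (Conf L) ℂ :=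
  -(siteOp L S3 x * siteOp L S3 (x + 1))
    + ((1 / 2 : ℝ) : ℂ) • (siteOp L S3 x - siteOp L S3 (x + 1))
    + ((1 / 4 : ℝ) : ℂ) • 1

/-- The Ising kink Hamiltonian `H^Ising = ∑_{x=1}^{L-1} h^Ising_{x,x+1}`. -/
def HIsing (L : ℕ) : Matrix (Conf L) (Conf L) ℂ :=
  ∑ x ∈ Finset.range (L - 1), hIsing L x

/-- The set of (real) eigenvalues of a matrix. -/
def eigSet {n : Type*} [Fintype n] [DecidableEq n] (H : Matrix n n ℂ) : Set ℝ :=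
  {μ : ℝ | ∃ ψ : n → ℂ, ψ ≠ 0 ∧ H.mulVec ψ = (μ : ℂ) • ψ}

/-- Euclidean norm of `𝐁(x) ∈ ℝ³`. -/
def bnorm (b : Fin 3 → ℝ) : ℝ := Real.sqrt (b 0 ^ 2 + b 1 ^ 2 + b 2 ^ 2)

/-- The magnetic field term `𝐁(x)·𝐒_x` at (0-based) site `x`. -/
def fieldOp (L : ℕ) (b : Fin 3 → ℝ) (x : ℕ) : Matrix (Conf L) (Conf L) ℂ :=
  (b 0 : ℂ) • siteOp L S1 x + (b 1 : ℂ) • siteOp L S2 x + (b 2 : ℂ) • siteOp L S3 x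

/-- The vector `|↓⟩^{⊗(a−1)} ⊗ ψ_{[a,b]} ⊗ |↑⟩^{⊗(L−b)}` on the chain of length `L`,
where `ψ` lives on the sub-chain of the paper's sites `a,…,b` (0-based full-chain
sites `a-1,…,b-1`). -/
def embedSub (L a b : ℕ) (ha : 1 ≤ a) (hab : a ≤ b) (hbL : b ≤ L)
    (ψ : Conf (b - a + 1) → ℂ) : Conf L → ℂ :=
  fun m => ψ (fun i => m ⟨a - 1 + i.1, by have := i.2; omega⟩) *
    ∏ x : Fin L,
      if x.1 < a - 1 then (if m x = 1 then 1 else 0)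
      else if b ≤ x.1 then (if m x = 0 then 1 else 0)
      else 1

namespace IsingAux

def s3v : Fin 2 → ℂ := ![1/2, -1/2]

lemma S3_eq : S3 = Matrix.diagonal s3v := by
  ext i j
  fin_cases i <;> fin_cases j <;> simp [S3, s3v, Matrix.diagonal]

lemma siteOp_diagonal (L : ℕ) (d : Fin 2 → ℂ) (x : ℕ) (hx : x < L) :
    siteOp L (Matrix.diagonal d) x
      = Matrix.diagonal (fun m : Conf L => d (m ⟨x, hx⟩)) := by
  ext m n
  simp only [siteOp, dif_pos hx]
  by_cases hmn : m = n
  · subst hmn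
    simp [Matrix.diagonal_apply_eq]
  · rw [Matrix.diagonal_apply_ne _ hmn]
    obtain ⟨y, hy⟩ := Function.ne_iff.mp hmn
    by_cases hyx : y = ⟨x, hx⟩
    · subst hyx
      rw [Matrix.diagonal_apply_ne _ hy, zero_mul]
    · rw [Finset.prod_eq_zero (Finset.mem_erase.mpr ⟨hyx, Finset.mem_univ y⟩)
        (show (if m y = n y then (1:ℂ) else 0) = 0 from if_neg hy), mul_zero]

def hval : Fin 2 → Fin 2 → ℂ := fun s t => if s = 0 ∧ t = 1 then 1 else 0

lemma hval_nonneg (s t : Fin 2) : 0 ≤ hval s t := by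
  unfold hval; split
  · exact zero_le_one
  · exact le_refl 0

lemma hval_star (s t : Fin 2) : star (hval s t) = hval s t := by
  unfold hval; split <;> simp

lemma hval_one_left (t : Fin 2) : hval 1 t = 0 := by
  unfold hval
  simp

lemma hval_zero_right (s : Fin 2) : hval s 0 = 0 := by
  unfold hval
  simp

lemma hval_eq (s t : Fin 2) :
    -(s3v s * s3v t) + ((1/2:ℝ):ℂ) * (s3v s - s3v t) + ((1/4:ℝ):ℂ) * 1 = hval s t := by
  fin_cases s <;> fin_cases t <;> norm_num [s3v, hval]

lemma hIsing_diagonal (L x : ℕ) (hx : x + 1 < L) :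
    hIsing L x = Matrix.diagonal
      (fun m : Conf L => hval (m ⟨x, by omega⟩) (m ⟨x + 1, hx⟩)) := by
  ext m n
  rw [hIsing, S3_eq, siteOp_diagonal L s3v x (by omega), siteOp_diagonal L s3v (x + 1) hx,
    Matrix.diagonal_mul_diagonal]
  by_cases hmn : m = n
  · subst hmn
    simp only [Matrix.add_apply, Matrix.neg_apply, Matrix.smul_apply, Matrix.sub_apply,
      Matrix.one_apply_eq, Matrix.diagonal_apply_eq, smul_eq_mul]
    exact hval_eq _ _
  · simp [Matrix.diagonal_apply_ne _ hmn, Matrix.one_apply_ne hmn]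

end IsingAux
namespace IsingAux

/-- Outer sites. -/
def OuterT (L o k : ℕ) := {y : Fin L // y.1 < o ∨ o + k ≤ y.1}

instance (L o k : ℕ) : Fintype (OuterT L o k) := by unfold OuterT; infer_instance
instance (L o k : ℕ) : DecidableEq (OuterT L o k) := by unfold OuterT; infer_instance

def res (L o k : ℕ) (hok : o + k ≤ L) (m : Conf L) : Conf k :=
  fun i => m ⟨o + i.1, by omega⟩

def glue (L o k : ℕ) (hok : o + k ≤ L) (σ : OuterT L o k → Fin 2) (r : Conf k) : Conf L :=
  fun y => if h : y.1 < o ∨ o + k ≤ y.1 then σ ⟨y, h⟩ else r ⟨y.1 - o, by omega⟩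

lemma res_glue (L o k : ℕ) (hok : o + k ≤ L) (σ : OuterT L o k → Fin 2) (r : Conf k) :
    res L o k hok (glue L o k hok σ r) = r := by
  funext i
  simp only [res, glue]
  rw [dif_neg (by omega)]
  congr 1
  exact Fin.ext (by simp)

lemma glue_outer (L o k : ℕ) (hok : o + k ≤ L) (σ : OuterT L o k → Fin 2) (r : Conf k)
    (y : Fin L) (hy : y.1 < o ∨ o + k ≤ y.1) :
    glue L o k hok σ r y = σ ⟨y, hy⟩ := dif_pos hy

def confEquiv (L o k : ℕ) (hok : o + k ≤ L) :
    Conf L ≃ ((OuterT L o k → Fin 2) × Conf k) where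
  toFun m := (fun y => m y.1, res L o k hok m)
  invFun p := glue L o k hok p.1 p.2
  left_inv m := by
    funext y
    simp only [glue, res]
    split
    · rfl
    · congr 1
      exact Fin.ext (by simp; omega)
  right_inv p := by
    obtain ⟨σ, r⟩ := p
    refine Prod.ext ?_ (res_glue L o k hok σ r)
    funext y
    exact dif_pos y.2

/-- Indicator that `m` and `n` agree on outer sites. -/
def outerProd (L o k : ℕ) (m n : Conf L) : ℂ :=
  ∏ y : Fin L, if y.1 < o ∨ o + k ≤ y.1 then (if m y = n y then 1 else 0) else 1

/-- Indicator that `m` is all-1 below `o` and all-0 from `o+k` on. -/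
def patProd (L o k : ℕ) (m : Conf L) : ℂ :=
  ∏ x : Fin L,
    if x.1 < o then (if m x = 1 then 1 else 0)
    else if o + k ≤ x.1 then (if m x = 0 then 1 else 0)
    else 1

def pat0 (L o k : ℕ) : OuterT L o k → Fin 2 := fun y => if y.1.1 < o then 1 else 0

lemma patProd_glue (L o k : ℕ) (hok : o + k ≤ L) (σ : OuterT L o k → Fin 2) (r : Conf k) :
    patProd L o k (glue L o k hok σ r) = if σ = pat0 L o k then 1 else 0 := by
  by_cases hσ : σ = pat0 L o k
  · subst hσ
    rw [if_pos rfl]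
    apply Finset.prod_eq_one
    intro y _
    by_cases h1 : y.1 < o
    · rw [if_pos h1, glue_outer L o k hok _ r y (Or.inl h1), if_pos]
      simp [pat0, h1]
    · rw [if_neg h1]
      by_cases h2 : o + k ≤ y.1
      · rw [if_pos h2, glue_outer L o k hok _ r y (Or.inr h2), if_pos]
        simp [pat0, h1]
      · rw [if_neg h2]
  · rw [if_neg hσ]
    obtain ⟨y0, hy0⟩ := Function.ne_iff.mp hσ
    apply Finset.prod_eq_zero (Finset.mem_univ y0.1)
    have hout := y0.2
    rcases hout with h1 | h2
    · rw [if_pos h1, glue_outer L o k hok σ r y0.1 (Or.inl h1)]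
      have : σ ⟨y0.1, Or.inl h1⟩ = σ y0 := by congr 1
      rw [this, if_neg]
      intro hh
      apply hy0
      rw [hh]
      simp [pat0, h1]
    · have h1 : ¬ y0.1.1 < o := by omega
      rw [if_neg h1, if_pos h2, glue_outer L o k hok σ r y0.1 (Or.inr h2)]
      have : σ ⟨y0.1, Or.inr h2⟩ = σ y0 := by congr 1
      rw [this, if_neg]
      intro hh
      apply hy0
      rw [hh]
      simp [pat0, h1]

lemma outerProd_glue (L o k : ℕ) (hok : o + k ≤ L) (σ σ' : OuterT L o k → Fin 2)
    (r r' : Conf k) :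
    outerProd L o k (glue L o k hok σ r) (glue L o k hok σ' r')
      = if σ = σ' then 1 else 0 := by
  by_cases hσ : σ = σ'
  · subst hσ
    rw [if_pos rfl]
    apply Finset.prod_eq_one
    intro y _
    by_cases hy : y.1 < o ∨ o + k ≤ y.1
    · rw [if_pos hy, glue_outer L o k hok σ r y hy, glue_outer L o k hok σ r' y hy, if_pos rfl]
    · rw [if_neg hy]
  · rw [if_neg hσ]
    obtain ⟨y0, hy0⟩ := Function.ne_iff.mp hσ
    apply Finset.prod_eq_zero (Finset.mem_univ y0.1)
    rw [if_pos y0.2, glue_outer L o k hok σ r y0.1 y0.2, glue_outer L o k hok σ' r' y0.1 y0.2]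
    have e1 : σ ⟨y0.1, y0.2⟩ = σ y0 := by congr 1
    have e2 : σ' ⟨y0.1, y0.2⟩ = σ' y0 := by congr 1
    rw [e1, e2, if_neg hy0]

lemma outerProd_glue_pat (L o k : ℕ) (hok : o + k ≤ L) (m : Conf L) (r : Conf k) :
    outerProd L o k m (glue L o k hok (pat0 L o k) r) = patProd L o k m := by
  apply Finset.prod_congr rfl
  intro y _
  by_cases h1 : y.1 < o
  · rw [if_pos (Or.inl h1), if_pos h1, glue_outer L o k hok _ r y (Or.inl h1)]
    simp [pat0, h1]
  · by_cases h2 : o + k ≤ y.1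
    · rw [if_pos (Or.inr h2), if_neg h1, if_pos h2, glue_outer L o k hok _ r y (Or.inr h2)]
      simp [pat0, h1]
    · rw [if_neg (by omega), if_neg h1, if_neg h2]

lemma patProd_zero_low (L o k : ℕ) (m : Conf L) (y : Fin L) (hy : y.1 < o) (hm : m y ≠ 1) :
    patProd L o k m = 0 :=
  Finset.prod_eq_zero (Finset.mem_univ y) (by rw [if_pos hy, if_neg hm])

lemma patProd_zero_high (L o k : ℕ) (m : Conf L) (y : Fin L) (hy : o + k ≤ y.1)
    (hm : m y ≠ 0) : patProd L o k m = 0 :=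
  Finset.prod_eq_zero (Finset.mem_univ y) (by rw [if_neg (by omega), if_pos hy, if_neg hm])

end IsingAux
namespace IsingAux

def embedOp (L o k : ℕ) (hok : o + k ≤ L) (A : Matrix (Conf k) (Conf k) ℂ) :
    Matrix (Conf L) (Conf L) ℂ :=
  fun m n => A (res L o k hok m) (res L o k hok n) * outerProd L o k m n

lemma outerProd_self (L o k : ℕ) (m : Conf L) : outerProd L o k m m = 1 := by
  apply Finset.prod_eq_one
  intro y _
  split <;> simp

lemma embedOp_diagonal (L o k : ℕ) (hok : o + k ≤ L) (f : Conf k → ℂ) :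
    embedOp L o k hok (Matrix.diagonal f)
      = Matrix.diagonal (fun m => f (res L o k hok m)) := by
  ext m n
  by_cases hmn : m = n
  · subst hmn
    simp [embedOp, outerProd_self, Matrix.diagonal_apply_eq]
  · rw [Matrix.diagonal_apply_ne _ hmn]
    obtain ⟨y, hy⟩ := Function.ne_iff.mp hmn
    by_cases hout : y.1 < o ∨ o + k ≤ y.1
    · have : outerProd L o k m n = 0 := by
        apply Finset.prod_eq_zero (Finset.mem_univ y)
        rw [if_pos hout, if_neg hy]
      rw [embedOp, this, mul_zero]
    · have hres : res L o k hok m ≠ res L o k hok n := by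
        intro heq
        apply hy
        have hy2 : y = ⟨o + (y.1 - o), by omega⟩ := Fin.ext (by simp; omega)
        have := congrFun heq ⟨y.1 - o, by omega⟩
        simp only [res] at this
        rw [hy2]
        exact this
      rw [embedOp, Matrix.diagonal_apply_ne _ hres, zero_mul]

lemma embedOp_siteOp (L o k : ℕ) (hok : o + k ≤ L) (A : Matrix (Fin 2) (Fin 2) ℂ)
    (x : ℕ) (hx : x < k) :
    siteOp L A (o + x) = embedOp L o k hok (siteOp k A x) := by
  ext m n
  have hoxL : o + x < L := by omega
  rw [embedOp]
  simp only [siteOp, dif_pos hoxL, dif_pos hx]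
  have hres : ∀ mm : Conf L, res L o k hok mm ⟨x, hx⟩ = mm ⟨o + x, hoxL⟩ := fun _ => rfl
  rw [hres, hres, mul_assoc]
  congr 1
  set p : Fin L := ⟨o + x, hoxL⟩ with hp
  by_cases hall : ∀ y : Fin L, y ≠ p → m y = n y
  · have h1 : (∏ y ∈ Finset.univ.erase p, if m y = n y then (1:ℂ) else 0) = 1 := by
      apply Finset.prod_eq_one
      intro y hy
      rw [if_pos (hall y (Finset.mem_erase.mp hy).1)]
    have h2 : (∏ j ∈ Finset.univ.erase (⟨x, hx⟩ : Fin k),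
        if res L o k hok m j = res L o k hok n j then (1:ℂ) else 0) = 1 := by
      apply Finset.prod_eq_one
      intro j hj
      apply if_pos
      apply hall
      intro hjp
      apply (Finset.mem_erase.mp hj).1
      apply Fin.ext
      have := congrArg Fin.val hjp
      simp only [res] at this ⊢
      have h' : o + (j : ℕ) = o + x := this
      omega
    have h3 : outerProd L o k m n = 1 := by
      apply Finset.prod_eq_one
      intro y _
      by_cases hy : y.1 < o ∨ o + k ≤ y.1
      · rw [if_pos hy, if_pos (hall y (by intro hyp; subst hyp; simp [hp] at hy; omega))]
      · rw [if_neg hy]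
    rw [h1, h2, h3, mul_one]
  · push_neg at hall
    obtain ⟨y0, hy0p, hy0⟩ := hall
    have h1 : (∏ y ∈ Finset.univ.erase p, if m y = n y then (1:ℂ) else 0) = 0 :=
      Finset.prod_eq_zero (Finset.mem_erase.mpr ⟨hy0p, Finset.mem_univ _⟩) (if_neg hy0)
    rw [h1]
    by_cases hout : y0.1 < o ∨ o + k ≤ y0.1
    · have h3 : outerProd L o k m n = 0 :=
        Finset.prod_eq_zero (Finset.mem_univ y0) (by rw [if_pos hout, if_neg hy0])
      rw [h3, mul_zero]
    · set j0 : Fin k := ⟨y0.1 - o, by omega⟩ with hj0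
      have hy0e : y0 = ⟨o + j0.1, by omega⟩ := Fin.ext (by simp [hj0]; omega)
      have hj0x : j0 ≠ ⟨x, hx⟩ := by
        intro hh
        apply hy0p
        rw [hy0e, hp]
        apply Fin.ext
        have := congrArg Fin.val hh
        simp only [hj0] at this
        simp
        omega
      have h2 : (∏ j ∈ Finset.univ.erase (⟨x, hx⟩ : Fin k),
          if res L o k hok m j = res L o k hok n j then (1:ℂ) else 0) = 0 := by
        apply Finset.prod_eq_zero (Finset.mem_erase.mpr ⟨hj0x, Finset.mem_univ _⟩)
        apply if_neg
        intro hh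
        apply hy0
        simp only [res] at hh
        rw [hy0e]
        exact hh
      rw [h2, zero_mul]

lemma embedOp_add (L o k : ℕ) (hok : o + k ≤ L) (A B : Matrix (Conf k) (Conf k) ℂ) :
    embedOp L o k hok (A + B) = embedOp L o k hok A + embedOp L o k hok B := by
  ext m n
  simp [embedOp, add_mul]

lemma embedOp_smul (L o k : ℕ) (hok : o + k ≤ L) (c : ℂ) (A : Matrix (Conf k) (Conf k) ℂ) :
    embedOp L o k hok (c • A) = c • embedOp L o k hok A := by
  ext m n
  simp [embedOp, mul_assoc]

lemma embedOp_sub (L o k : ℕ) (hok : o + k ≤ L) (A B : Matrix (Conf k) (Conf k) ℂ) :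
    embedOp L o k hok (A - B) = embedOp L o k hok A - embedOp L o k hok B := by
  ext m n
  simp [embedOp, sub_mul]

lemma embedOp_one (L o k : ℕ) (hok : o + k ≤ L) :
    embedOp L o k hok 1 = 1 := by
  rw [← Matrix.diagonal_one, embedOp_diagonal]
  rfl

lemma embedOp_sum {ι : Type*} (L o k : ℕ) (hok : o + k ≤ L) (s : Finset ι)
    (A : ι → Matrix (Conf k) (Conf k) ℂ) :
    embedOp L o k hok (∑ i ∈ s, A i) = ∑ i ∈ s, embedOp L o k hok (A i) := by
  ext m n
  simp [embedOp, Finset.sum_mul, Matrix.sum_apply]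

end IsingAux
namespace IsingAux

lemma embedOp_apply (L o k : ℕ) (hok : o + k ≤ L) (A : Matrix (Conf k) (Conf k) ℂ)
    (m n : Conf L) :
    embedOp L o k hok A m n
      = A (res L o k hok m) (res L o k hok n) * outerProd L o k m n := rfl

lemma star_outerProd (L o k : ℕ) (m n : Conf L) :
    star (outerProd L o k m n) = outerProd L o k n m := by
  rw [outerProd, star_prod, outerProd]
  apply Finset.prod_congr rfl
  intro y _
  by_cases hy : y.1 < o ∨ o + k ≤ y.1
  · rw [if_pos hy, if_pos hy]
    by_cases hmn : m y = n y
    · rw [if_pos hmn, if_pos hmn.symm, star_one]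
    · rw [if_neg hmn, if_neg (fun h => hmn h.symm), star_zero]
  · rw [if_neg hy, if_neg hy, star_one]

lemma embedOp_conjTranspose (L o k : ℕ) (hok : o + k ≤ L) (A : Matrix (Conf k) (Conf k) ℂ) :
    (embedOp L o k hok A)ᴴ = embedOp L o k hok Aᴴ := by
  ext m n
  rw [Matrix.conjTranspose_apply, embedOp_apply, embedOp_apply, star_mul', star_outerProd,
    Matrix.conjTranspose_apply]

lemma sum_mulVec {n : Type*} [Fintype n] [DecidableEq n] {ι : Type*} (s : Finset ι)
    (M : ι → Matrix n n ℂ) (v : n → ℂ) :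
    (∑ i ∈ s, M i) *ᵥ v = ∑ i ∈ s, (M i *ᵥ v) := by
  funext x
  simp only [Matrix.mulVec, dotProduct, Matrix.sum_apply, Finset.sum_apply, Finset.sum_mul]
  exact Finset.sum_comm

lemma embedOp_posSemidef (L o k : ℕ) (hok : o + k ≤ L) {A : Matrix (Conf k) (Conf k) ℂ}
    (hA : A.PosSemidef) : (embedOp L o k hok A).PosSemidef := by
  apply Matrix.PosSemidef.of_dotProduct_mulVec_nonneg
  · rw [Matrix.IsHermitian, embedOp_conjTranspose, hA.1.eq]
  · intro v
    have key : star v ⬝ᵥ (embedOp L o k hok A *ᵥ v)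
        = ∑ σ : OuterT L o k → Fin 2,
            star (fun r => v (glue L o k hok σ r)) ⬝ᵥ
              (A *ᵥ fun r => v (glue L o k hok σ r)) := by
      simp only [dotProduct, Matrix.mulVec, Pi.star_apply, Finset.mul_sum]
      rw [← Equiv.sum_comp (confEquiv L o k hok).symm
        (fun m => ∑ n, star (v m) * (embedOp L o k hok A m n * v n)),
        Fintype.sum_prod_type]
      apply Finset.sum_congr rfl
      intro σ _
      apply Finset.sum_congr rfl
      intro r _
      rw [← Equiv.sum_comp (confEquiv L o k hok).symm
        (fun nn => star (v ((confEquiv L o k hok).symm (σ, r))) *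
          (embedOp L o k hok A ((confEquiv L o k hok).symm (σ, r)) nn * v nn)),
        Fintype.sum_prod_type, Finset.sum_eq_single σ]
      · apply Finset.sum_congr rfl
        intro r' _
        show star (v (glue L o k hok σ r)) *
            (embedOp L o k hok A (glue L o k hok σ r) (glue L o k hok σ r')
              * v (glue L o k hok σ r')) = _
        rw [embedOp_apply, res_glue, res_glue, outerProd_glue, if_pos rfl, mul_one]
      · intro σ' _ hσ'
        apply Finset.sum_eq_zero
        intro r' _
        show star (v (glue L o k hok σ r)) *
            (embedOp L o k hok A (glue L o k hok σ r) (glue L o k hok σ' r')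
              * v (glue L o k hok σ' r')) = 0
        rw [embedOp_apply, res_glue, res_glue, outerProd_glue, if_neg (Ne.symm hσ')]
        ring
      · intro habs
        exact absurd (Finset.mem_univ σ) habs
    rw [key]
    exact Finset.sum_nonneg fun σ _ => hA.dotProduct_mulVec_nonneg _

lemma embedOp_mulVec (L o k : ℕ) (hok : o + k ≤ L) (A : Matrix (Conf k) (Conf k) ℂ)
    (ψ : Conf k → ℂ) :
    embedOp L o k hok A *ᵥ (fun m => ψ (res L o k hok m) * patProd L o k m)
      = fun m => (A *ᵥ ψ) (res L o k hok m) * patProd L o k m := by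
  funext m
  show (∑ n, embedOp L o k hok A m n * (ψ (res L o k hok n) * patProd L o k n)) = _
  rw [← Equiv.sum_comp (confEquiv L o k hok).symm
    (fun n => embedOp L o k hok A m n * (ψ (res L o k hok n) * patProd L o k n)),
    Fintype.sum_prod_type, Finset.sum_eq_single (pat0 L o k)]
  · have hterm : ∀ r' : Conf k,
        ((fun n => embedOp L o k hok A m n * (ψ (res L o k hok n) * patProd L o k n))
          ((confEquiv L o k hok).symm (pat0 L o k, r')))
        = (A (res L o k hok m) r' * ψ r') * patProd L o k m := by
      intro r'
      show embedOp L o k hok A m (glue L o k hok (pat0 L o k) r') *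
          (ψ (res L o k hok (glue L o k hok (pat0 L o k) r')) *
            patProd L o k (glue L o k hok (pat0 L o k) r')) = _
      rw [embedOp_apply, res_glue, patProd_glue, if_pos rfl, outerProd_glue_pat]
      ring
    rw [Finset.sum_congr rfl (fun r' _ => hterm r'), ← Finset.sum_mul]
    rfl
  · intro σ' _ hσ'
    apply Finset.sum_eq_zero
    intro r' _
    show embedOp L o k hok A m (glue L o k hok σ' r') *
        (ψ (res L o k hok (glue L o k hok σ' r')) *
          patProd L o k (glue L o k hok σ' r')) = 0
    rw [patProd_glue, if_neg hσ']
    ring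
  · intro habs
    exact absurd (Finset.mem_univ _) habs

end IsingAux
namespace IsingAux

lemma hIsing_posSemidef (L x : ℕ) (hx : x + 1 < L) : (hIsing L x).PosSemidef := by
  rw [hIsing_diagonal L x hx]
  exact Matrix.PosSemidef.diagonal (fun m => hval_nonneg _ _)

lemma posSemidef_sum {n : Type*} [Fintype n] [DecidableEq n] {ι : Type*} (s : Finset ι)
    (M : ι → Matrix n n ℂ) (h : ∀ i ∈ s, (M i).PosSemidef) :
    (∑ i ∈ s, M i).PosSemidef := by
  classical
  induction s using Finset.induction_on with
  | empty => simpa using Matrix.PosSemidef.zero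
  | insert _ _ hni ih =>
    rw [Finset.sum_insert hni]
    exact (h _ (Finset.mem_insert_self _ _)).add
      (ih fun i hi => h i (Finset.mem_insert_of_mem hi))

lemma siteOp_conjTranspose (L : ℕ) (A : Matrix (Fin 2) (Fin 2) ℂ) (x : ℕ) :
    (siteOp L A x)ᴴ = siteOp L Aᴴ x := by
  ext m n
  rw [Matrix.conjTranspose_apply]
  by_cases hx : x < L
  · simp only [siteOp, dif_pos hx]
    rw [star_mul', star_prod, Matrix.conjTranspose_apply]
    congr 1
    apply Finset.prod_congr rfl
    intro y _
    by_cases hmn : m y = n y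
    · rw [if_pos hmn.symm, if_pos hmn, star_one]
    · rw [if_neg (fun h => hmn h.symm), if_neg hmn, star_zero]
  · simp only [siteOp, dif_neg hx, star_zero]

lemma S1_herm : S1ᴴ = S1 := by
  ext i j
  fin_cases i <;> fin_cases j <;>
    simp [S1, Matrix.conjTranspose_apply] <;> norm_num

lemma S2_herm : S2ᴴ = S2 := by
  ext i j
  fin_cases i <;> fin_cases j <;>
    simp [S2, Matrix.conjTranspose_apply, Complex.ext_iff]

lemma S3_herm : S3ᴴ = S3 := by
  ext i j
  fin_cases i <;> fin_cases j <;>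
    simp [S3, Matrix.conjTranspose_apply] <;> norm_num

lemma fieldOp_isHermitian (L : ℕ) (bv : Fin 3 → ℝ) (x : ℕ) :
    (fieldOp L bv x).IsHermitian := by
  rw [Matrix.IsHermitian, fieldOp, Matrix.conjTranspose_add, Matrix.conjTranspose_add,
    Matrix.conjTranspose_smul, Matrix.conjTranspose_smul, Matrix.conjTranspose_smul,
    siteOp_conjTranspose, siteOp_conjTranspose, siteOp_conjTranspose,
    S1_herm, S2_herm, S3_herm]
  simp [Complex.star_def, Complex.conj_ofReal]

lemma hIsing_isHermitian (L x : ℕ) (hx : x + 1 < L) : (hIsing L x).IsHermitian := by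
  rw [hIsing_diagonal L x hx]
  exact Matrix.isHermitian_diagonal_of_self_adjoint _ (funext fun m => hval_star _ _)

lemma HIsing_isHermitian (L : ℕ) : (HIsing L).IsHermitian := by
  rw [Matrix.IsHermitian, HIsing, Matrix.conjTranspose_sum]
  apply Finset.sum_congr rfl
  intro x hx
  exact hIsing_isHermitian L x (by have := Finset.mem_range.mp hx; omega)

lemma groundState_posSemidef {n : Type*} [Fintype n] [DecidableEq n] {H : Matrix n n ℂ}
    (hH : H.IsHermitian) {E : ℝ} (hE : ∀ μ ∈ eigSet H, E ≤ μ) :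
    (H - (E : ℂ) • 1).PosSemidef := by
  have hM : (H - (E : ℂ) • (1 : Matrix n n ℂ)).IsHermitian := by
    apply hH.sub
    rw [Matrix.IsHermitian, Matrix.conjTranspose_smul, Matrix.conjTranspose_one,
      Complex.star_def, Complex.conj_ofReal]
  apply hM.posSemidef_iff_eigenvalues_nonneg.mpr
  intro i
  set ν := hM.eigenvalues i with hν
  have hw := hM.mulVec_eigenvectorBasis i
  set w : n → ℂ := ⇑(hM.eigenvectorBasis i) with hwdef
  have hw0 : w ≠ 0 := by
    intro h0
    apply hM.eigenvectorBasis.orthonormal.ne_zero i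
    apply PiLp.ext
    intro j
    exact congrFun h0 j
  have hsub : (H - (E : ℂ) • (1 : Matrix n n ℂ)) *ᵥ w = H *ᵥ w - (E : ℂ) • w := by
    rw [Matrix.sub_mulVec, Matrix.smul_mulVec, Matrix.one_mulVec]
  have hsmul : ν • w = ((ν : ℂ)) • w := by
    funext j
    simp [Complex.real_smul]
  have hHw : H *ᵥ w = ((ν + E : ℝ) : ℂ) • w := by
    have h2 : H *ᵥ w - (E : ℂ) • w = ((ν : ℂ)) • w := by
      rw [← hsub, hw, ← hsmul]
    have h3 : H *ᵥ w = ((ν : ℂ)) • w + (E : ℂ) • w := by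
      rw [← h2]; abel
    rw [h3, ← add_smul]
    push_cast
    rfl
  have hmem : (ν + E) ∈ eigSet H := ⟨w, hw0, hHw⟩
  have := hE _ hmem
  exact (show (0:ℝ) ≤ ν by linarith)

end IsingAux
namespace IsingAux

lemma embedOp_hIsing (L o k : ℕ) (hok : o + k ≤ L) (x : ℕ) (hx : x + 1 < k) :
    hIsing L (o + x) = embedOp L o k hok (hIsing k x) := by
  rw [hIsing_diagonal L (o + x) (by omega), hIsing_diagonal k x hx, embedOp_diagonal]
  rfl

lemma embedOp_fieldOp (L o k : ℕ) (hok : o + k ≤ L) (bv : Fin 3 → ℝ) (x : ℕ) (hx : x < k) :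
    fieldOp L bv (o + x) = embedOp L o k hok (fieldOp k bv x) := by
  rw [fieldOp, fieldOp, embedOp_add, embedOp_add, embedOp_smul, embedOp_smul, embedOp_smul,
    embedOp_siteOp L o k hok S1 x hx, embedOp_siteOp L o k hok S2 x hx,
    embedOp_siteOp L o k hok S3 x hx]

lemma HIsing_split (L o k : ℕ) (hok : o + k ≤ L) :
    HIsing L = embedOp L o k hok (HIsing k)
      + ∑ x ∈ Finset.range (L - 1) \ (Finset.range (k - 1)).image (o + ·), hIsing L x := by
  have hsub : (Finset.range (k - 1)).image (o + ·) ⊆ Finset.range (L - 1) := by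
    intro y hy
    simp only [Finset.mem_image, Finset.mem_range] at hy ⊢
    obtain ⟨x, hx, rfl⟩ := hy
    omega
  rw [HIsing, ← Finset.sum_sdiff hsub,
    Finset.sum_image (fun x _ y _ h => by omega), HIsing, embedOp_sum,
    Finset.sum_congr rfl (fun x hx =>
      embedOp_hIsing L o k hok x (by have := Finset.mem_range.mp hx; omega))]
  exact add_comm _ _

lemma embedSub_eq (L a b : ℕ) (ha : 1 ≤ a) (hab : a ≤ b) (hbL : b ≤ L)
    (hok : (a - 1) + (b - a + 1) ≤ L) (ψ : Conf (b - a + 1) → ℂ) :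
    embedSub L a b ha hab hbL ψ
      = fun m => ψ (res L (a - 1) (b - a + 1) hok m) * patProd L (a - 1) (b - a + 1) m := by
  funext m
  rw [embedSub, patProd]
  refine congrArg₂ (· * ·) rfl ?_
  apply Finset.prod_congr rfl
  intro x _
  by_cases h1 : x.1 < a - 1
  · rw [if_pos h1, if_pos h1]
  · rw [if_neg h1, if_neg h1]
    by_cases h2 : b ≤ x.1
    · rw [if_pos h2, if_pos (by omega : (a - 1) + (b - a + 1) ≤ x.1)]
    · rw [if_neg h2, if_neg (by omega : ¬ (a - 1) + (b - a + 1) ≤ x.1)]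

end IsingAux

/-- if `ψ_{[a,b]}` is a ground state, with lowest eigenvalue `E`, of the
Ising kink Hamiltonian plus field `V = ∑_{x=a}^b 𝐁(x)·𝐒_x` on the sub-chain `[a,b]`,
then `|↓⟩^{⊗(a−1)} ⊗ ψ_{[a,b]} ⊗ |↑⟩^{⊗(L−b)}` is an eigenvector of the full-chain
Hamiltonian `H^Ising + V` with eigenvalue `E`, and `E` is the lowest eigenvalue of
`H^Ising + V`, i.e. this vector is a ground state of `H^Ising + V`. -/
theorem ising_ground_state_embedding
    (L a b : ℕ) (hL : 2 ≤ L) (ha : 1 ≤ a) (hab : a ≤ b) (hbL : b ≤ L)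
    (B : ℕ → Fin 3 → ℝ)
    (ψ : Conf (b - a + 1) → ℂ) (E : ℝ)
    (hψ0 : ψ ≠ 0)
    (heig : (HIsing (b - a + 1)
        + ∑ x ∈ Finset.range (b - a + 1), fieldOp (b - a + 1) (B (a + x)) x).mulVec ψ
      = (E : ℂ) • ψ)
    (hleast : IsLeast (eigSet (HIsing (b - a + 1)
        + ∑ x ∈ Finset.range (b - a + 1), fieldOp (b - a + 1) (B (a + x)) x)) E) :
    (HIsing L
        + ∑ x ∈ Finset.range (b - a + 1), fieldOp L (B (a + x)) (a - 1 + x)).mulVec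
        (embedSub L a b ha hab hbL ψ)
      = (E : ℂ) • embedSub L a b ha hab hbL ψ ∧
    IsLeast (eigSet (HIsing L
        + ∑ x ∈ Finset.range (b - a + 1), fieldOp L (B (a + x)) (a - 1 + x))) E := by
  open IsingAux in
  have hok : (a - 1) + (b - a + 1) ≤ L := by omega
  -- abbreviations (plain `have`-free, to keep syntactic forms)
  -- decomposition of the full Hamiltonian
  have hVemb : (∑ x ∈ Finset.range (b - a + 1), fieldOp L (B (a + x)) (a - 1 + x))
      = embedOp L (a - 1) (b - a + 1) hok
          (∑ x ∈ Finset.range (b - a + 1), fieldOp (b - a + 1) (B (a + x)) x) := by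
    rw [embedOp_sum]
    exact Finset.sum_congr rfl fun x hx =>
      embedOp_fieldOp L (a - 1) (b - a + 1) hok (B (a + x)) x (Finset.mem_range.mp hx)
  have hHf : HIsing L + ∑ x ∈ Finset.range (b - a + 1), fieldOp L (B (a + x)) (a - 1 + x)
      = embedOp L (a - 1) (b - a + 1) hok
          (HIsing (b - a + 1)
            + ∑ x ∈ Finset.range (b - a + 1), fieldOp (b - a + 1) (B (a + x)) x)
        + ∑ x ∈ Finset.range (L - 1) \
            (Finset.range (b - a + 1 - 1)).image ((a - 1) + ·), hIsing L x := by
    rw [HIsing_split L (a - 1) (b - a + 1) hok, hVemb, embedOp_add]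
    abel
  have hΦ : embedSub L a b ha hab hbL ψ
      = fun m => ψ (res L (a - 1) (b - a + 1) hok m) * patProd L (a - 1) (b - a + 1) m :=
    embedSub_eq L a b ha hab hbL hok ψ
  -- the remainder term annihilates embedded vectors
  have hRΦ : ∀ ψ' : Conf (b - a + 1) → ℂ,
      (∑ x ∈ Finset.range (L - 1) \
          (Finset.range (b - a + 1 - 1)).image ((a - 1) + ·), hIsing L x) *ᵥ
        (fun m => ψ' (res L (a - 1) (b - a + 1) hok m) * patProd L (a - 1) (b - a + 1) m)
      = 0 := by
    intro ψ'
    rw [IsingAux.sum_mulVec]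
    apply Finset.sum_eq_zero
    intro x hx
    obtain ⟨hx1, hx2⟩ := Finset.mem_sdiff.mp hx
    have hxL : x < L - 1 := Finset.mem_range.mp hx1
    have hxT : x < a - 1 ∨ (a - 1) + (b - a + 1) - 1 ≤ x := by
      by_contra hcon
      push_neg at hcon
      apply hx2
      refine Finset.mem_image.mpr ⟨x - (a - 1), Finset.mem_range.mpr (by omega), by omega⟩
    rw [hIsing_diagonal L x (by omega)]
    funext m
    rw [Matrix.mulVec_diagonal]
    rcases hxT with hlow | hhigh
    · by_cases hm : m ⟨x, by omega⟩ = 1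
      · rw [hm, hval_one_left, zero_mul]
        rfl
      · rw [patProd_zero_low L (a - 1) (b - a + 1) m ⟨x, by omega⟩ hlow hm,
          mul_zero, mul_zero]
        rfl
    · by_cases hm : m ⟨x + 1, by omega⟩ = 0
      · rw [hm, hval_zero_right, zero_mul]
        rfl
      · rw [patProd_zero_high L (a - 1) (b - a + 1) m ⟨x + 1, by omega⟩ (by simp; omega) hm,
          mul_zero, mul_zero]
        rfl
  -- the eigenvalue equation on the full chain
  have main1 : (HIsing L
      + ∑ x ∈ Finset.range (b - a + 1), fieldOp L (B (a + x)) (a - 1 + x)) *ᵥ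
      embedSub L a b ha hab hbL ψ = (E : ℂ) • embedSub L a b ha hab hbL ψ := by
    rw [hHf, hΦ, Matrix.add_mulVec, embedOp_mulVec, heig, hRΦ ψ, add_zero]
    funext m
    simp only [Pi.smul_apply, smul_eq_mul]
    ring
  refine ⟨main1, ⟨embedSub L a b ha hab hbL ψ, ?_, main1⟩, ?_⟩
  · -- the embedded vector is nonzero
    obtain ⟨r0, hr0⟩ := Function.ne_iff.mp hψ0
    intro h0
    apply hr0
    have hgl := congrFun h0
      (glue L (a - 1) (b - a + 1) hok (pat0 L (a - 1) (b - a + 1)) r0)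
    rw [hΦ] at hgl
    simpa [res_glue, patProd_glue] using hgl
  · -- E is a lower bound on the spectrum
    have hHsherm : (HIsing (b - a + 1)
        + ∑ x ∈ Finset.range (b - a + 1), fieldOp (b - a + 1) (B (a + x)) x).IsHermitian := by
      apply (HIsing_isHermitian (b - a + 1)).add
      rw [Matrix.IsHermitian, Matrix.conjTranspose_sum]
      exact Finset.sum_congr rfl fun x _ => fieldOp_isHermitian (b - a + 1) (B (a + x)) x
    have hpsd_sub : ((HIsing (b - a + 1)
        + ∑ x ∈ Finset.range (b - a + 1), fieldOp (b - a + 1) (B (a + x)) x)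
          - (E : ℂ) • 1).PosSemidef :=
      groundState_posSemidef hHsherm fun μ hμ => hleast.2 hμ
    have hpsd_R : (∑ x ∈ Finset.range (L - 1) \
        (Finset.range (b - a + 1 - 1)).image ((a - 1) + ·), hIsing L x).PosSemidef := by
      apply IsingAux.posSemidef_sum
      intro x hx
      have := Finset.mem_range.mp (Finset.mem_sdiff.mp hx).1
      exact hIsing_posSemidef L x (by omega)
    have hMf : (HIsing L + ∑ x ∈ Finset.range (b - a + 1), fieldOp L (B (a + x)) (a - 1 + x))
        - (E : ℂ) • 1
        = embedOp L (a - 1) (b - a + 1) hok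
            ((HIsing (b - a + 1)
              + ∑ x ∈ Finset.range (b - a + 1), fieldOp (b - a + 1) (B (a + x)) x)
              - (E : ℂ) • 1)
          + ∑ x ∈ Finset.range (L - 1) \
              (Finset.range (b - a + 1 - 1)).image ((a - 1) + ·), hIsing L x := by
      rw [embedOp_sub, embedOp_smul, embedOp_one, hHf]
      abel
    have hpsd_f : ((HIsing L
        + ∑ x ∈ Finset.range (b - a + 1), fieldOp L (B (a + x)) (a - 1 + x))
        - (E : ℂ) • 1).PosSemidef := by
      rw [hMf]
      exact (embedOp_posSemidef L (a - 1) (b - a + 1) hok hpsd_sub).add hpsd_R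
    intro μ hμ
    obtain ⟨φ, hφ0, hφeq⟩ := hμ
    have h1 : ((HIsing L + ∑ x ∈ Finset.range (b - a + 1), fieldOp L (B (a + x)) (a - 1 + x))
        - (E : ℂ) • 1) *ᵥ φ = ((μ - E : ℝ) : ℂ) • φ := by
      rw [Matrix.sub_mulVec, Matrix.smul_mulVec, Matrix.one_mulVec, hφeq, ← sub_smul]
      norm_cast
    have h2 := hpsd_f.dotProduct_mulVec_nonneg φ
    rw [h1, dotProduct_smul, smul_eq_mul] at h2
    have h3 : star φ ⬝ᵥ φ = ((∑ j, Complex.normSq (φ j) : ℝ) : ℂ) := by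
      push_cast
      apply Finset.sum_congr rfl
      intro j _
      rw [Pi.star_apply, Complex.star_def, mul_comm, Complex.mul_conj]
    rw [h3] at h2
    have hc : 0 < ∑ j, Complex.normSq (φ j) := by
      obtain ⟨j0, hj0⟩ := Function.ne_iff.mp hφ0
      exact Finset.sum_pos' (fun j _ => Complex.normSq_nonneg _)
        ⟨j0, Finset.mem_univ _, Complex.normSq_pos.mpr hj0⟩
    have h4 : (0 : ℂ) ≤ (((μ - E) * ∑ j, Complex.normSq (φ j) : ℝ) : ℂ) := by
      exact_mod_cast h2
    have h5 : 0 ≤ (μ - E) * ∑ j, Complex.normSq (φ j) := Complex.zero_le_real.mp h4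
    nlinarith
end
end

section
/- Let 1 ≤ a < b and let B¹, B³ : [a,b] → ℝ with B¹(x) < 0 for all x ∈ [a,b]. Then the Hermitian operator H^Ising_{[a,b]} + Σ_{x=a}^{b} (B¹(x)S¹_x + B³(x)S³_x) on ⊗_{x=a}^{b} ℂ² has a simple (non-degenerate) lowest eigenvalue, and the corresponding eigenvector can be chosen with strictly positive components in the standard product basis. -/
open Matrix Finset
open scoped ComplexOrder

noncomputable section

theorem perron_general {n : Type*} [Fintype n] [DecidableEq n] [Nonempty n]
    (M : Matrix n n ℂ) (r : n → n → ℝ)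
    (hMr : ∀ i j, M i j = (r i j : ℂ))
    (hsym : ∀ i j, r j i = r i j)
    (hoff : ∀ i j, i ≠ j → r i j ≤ 0)
    (hconn : ∀ P : n → Prop, (∀ i, P i → ∀ j, i ≠ j → r i j ≠ 0 → P j) →
       ∀ i, P i → ∀ j, P j) :
    ∃ E : ℝ, IsLeast (eigSet M) E ∧
      Module.finrank ℂ (Module.End.eigenspace (Matrix.mulVecLin M) ((E : ℝ) : ℂ)) = 1 ∧
      ∃ φ : n → ℂ, M.mulVec φ = (E : ℂ) • φ ∧ ∀ m : n, ∃ ρ : ℝ, 0 < ρ ∧ φ m = (ρ : ℂ) := by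
  -- Hermitian
  have hH : M.IsHermitian := by
    ext i j
    simp only [conjTranspose_apply, hMr, Complex.star_def, Complex.conj_ofReal, hsym]
  -- entrywise mulVec formula
  have mv' : ∀ (v : n → ℝ) (j : n),
      M.mulVec (fun k => (v k : ℂ)) j = ((∑ k, r j k * v k : ℝ) : ℂ) := by
    intro v j
    simp only [Matrix.mulVec, dotProduct, hMr]
    push_cast
    rfl
  -- minimal eigenvalue
  obtain ⟨i0, -, hi0⟩ := Finset.exists_min_image (Finset.univ : Finset n) hH.eigenvalues
    ⟨Classical.arbitrary n, Finset.mem_univ _⟩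
  set E := hH.eigenvalues i0 with hE
  have hmin : ∀ i, E ≤ hH.eigenvalues i := fun i => hi0 i (Finset.mem_univ i)
  set ψ0 : n → ℂ := ⇑(hH.eigenvectorBasis i0) with hψ0
  have hψ0eig : M.mulVec ψ0 = (E : ℂ) • ψ0 := by
    have h := hH.mulVec_eigenvectorBasis i0
    rw [h]
    funext k
    simp only [Pi.smul_apply, Complex.real_smul, smul_eq_mul]
    rfl
  have hψ0ne : ψ0 ≠ 0 := by
    intro h
    have h1 : ‖hH.eigenvectorBasis i0‖ = 1 := hH.eigenvectorBasis.orthonormal.1 i0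
    have h2 : hH.eigenvectorBasis i0 = 0 := by
      ext k; exact congrFun h k
    rw [h2, norm_zero] at h1
    exact zero_ne_one h1
  -- positive semidefiniteness of M - E • 1
  set U : Matrix n n ℂ := (hH.eigenvectorUnitary : Matrix n n ℂ) with hUdef
  have hU : U * star U = 1 := mem_unitaryGroup_iff.mp hH.eigenvectorUnitary.2
  have hdiag : Matrix.diagonal (fun i => ((hH.eigenvalues i - E : ℝ) : ℂ))
      = Matrix.diagonal (RCLike.ofReal ∘ hH.eigenvalues) - (E : ℂ) • 1 := by
    ext i j
    rcases eq_or_ne i j with rfl | hij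
    · simp [Matrix.diagonal_apply_eq, Matrix.one_apply_eq, Complex.ofReal_sub]
    · simp [Matrix.diagonal_apply_ne _ hij, Matrix.one_apply_ne hij]
  have hM'eq : M - (E : ℂ) • 1
      = U * Matrix.diagonal (fun i => ((hH.eigenvalues i - E : ℝ) : ℂ)) * star U := by
    rw [hdiag, Matrix.mul_sub, Matrix.sub_mul]
    rw [mul_smul_comm, mul_one, Matrix.smul_mul, hU]
    exact congrArg (fun X => X - (E : ℂ) • 1) hH.spectral_theorem
  have hPSD : (M - (E : ℂ) • 1).PosSemidef := by
    rw [hM'eq]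
    have hd : (Matrix.diagonal fun i => ((hH.eigenvalues i - E : ℝ) : ℂ)).PosSemidef := by
      refine Matrix.posSemidef_diagonal_iff.mpr fun i => ?_
      rw [Complex.zero_le_real, sub_nonneg]
      exact hmin i
    have := hd.mul_mul_conjTranspose_same U
    simpa [Matrix.star_eq_conjTranspose] using this
  have hM'v : ∀ (μ : ℝ) (ψ : n → ℂ), M.mulVec ψ = (μ : ℂ) • ψ →
      (M - (E : ℂ) • 1).mulVec ψ = ((μ - E : ℝ) : ℂ) • ψ := by
    intro μ ψ h
    rw [Matrix.sub_mulVec, h, Matrix.smul_mulVec, Matrix.one_mulVec]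
    funext k
    push_cast
    simp only [Pi.sub_apply, Pi.smul_apply, smul_eq_mul]
    ring
  -- lower bound
  have hlb : ∀ μ ∈ eigSet M, E ≤ μ := by
    rintro μ ⟨ψ, hne, hψ⟩
    have h2 := hPSD.dotProduct_mulVec_nonneg ψ
    rw [hM'v μ ψ hψ, dotProduct_smul] at h2
    have hs : star ψ ⬝ᵥ ψ = ((∑ k, Complex.normSq (ψ k) : ℝ) : ℂ) := by
      simp only [dotProduct, Pi.star_apply, Complex.star_def]
      push_cast
      refine Finset.sum_congr rfl fun k _ => ?_
      rw [← Complex.normSq_eq_conj_mul_self]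
    have hspos : 0 < ∑ k, Complex.normSq (ψ k) := by
      obtain ⟨k0, hk0⟩ : ∃ k, ψ k ≠ 0 := by
        by_contra h; push_neg at h; exact hne (funext h)
      exact Finset.sum_pos' (fun k _ => Complex.normSq_nonneg _)
        ⟨k0, Finset.mem_univ _, Complex.normSq_pos.mpr hk0⟩
    rw [hs, smul_eq_mul, ← Complex.ofReal_mul, Complex.zero_le_real] at h2
    nlinarith
  -- the positive ground state
  set φr : n → ℝ := fun k => ‖ψ0 k‖ with hφr
  set φ : n → ℂ := fun k => (φr k : ℂ) with hφ
  have hM'r : ∀ i j, (M - (E : ℂ) • 1) i j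
      = ((r i j - if i = j then E else 0 : ℝ) : ℂ) := by
    intro i j
    rcases eq_or_ne i j with rfl | hij
    · simp [Matrix.sub_apply, Matrix.one_apply_eq, hMr]
    · simp [Matrix.sub_apply, Matrix.one_apply_ne hij, hMr, hij]
  have expand : ∀ v : n → ℂ, star v ⬝ᵥ (M - (E : ℂ) • 1).mulVec v
      = ∑ i, ∑ j, (((r i j - if i = j then E else 0 : ℝ) : ℂ))
          * ((starRingEnd ℂ) (v i) * v j) := by
    intro v
    simp only [dotProduct, Matrix.mulVec, Pi.star_apply, Complex.star_def, hM'r]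
    refine Finset.sum_congr rfl fun i _ => ?_
    rw [Finset.mul_sum]
    refine Finset.sum_congr rfl fun j _ => ?_
    ring
  have hψ0M' : (M - (E : ℂ) • 1).mulVec ψ0 = 0 := by
    rw [hM'v E ψ0 hψ0eig]
    simp
  have hzero : (0:ℝ) = ∑ i, ∑ j, (r i j - if i = j then E else 0)
      * ((starRingEnd ℂ) (ψ0 i) * ψ0 j).re := by
    have h0 : star ψ0 ⬝ᵥ (M - (E : ℂ) • 1).mulVec ψ0 = 0 := by
      rw [hψ0M', dotProduct_zero]
    rw [expand ψ0] at h0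
    have := congrArg Complex.re h0
    simpa [Complex.re_sum, Complex.re_ofReal_mul] using this.symm
  set Q : ℝ := ∑ i, ∑ j, (r i j - if i = j then E else 0) * (φr i * φr j) with hQ
  have hq1 : star φ ⬝ᵥ (M - (E : ℂ) • 1).mulVec φ = (Q : ℂ) := by
    rw [expand φ]
    have hterm : ∀ i j : n, (((r i j - if i = j then E else 0 : ℝ) : ℂ))
        * ((starRingEnd ℂ) (φ i) * φ j)
        = (((r i j - if i = j then E else 0) * (φr i * φr j) : ℝ) : ℂ) := by
      intro i j
      simp only [hφ, Complex.conj_ofReal]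
      push_cast
      ring
    rw [Finset.sum_congr rfl fun i _ => Finset.sum_congr rfl fun j _ => hterm i j, hQ]
    norm_cast
  have hQle : Q ≤ 0 := by
    rw [hzero, hQ]
    refine Finset.sum_le_sum fun i _ => Finset.sum_le_sum fun j _ => ?_
    rcases eq_or_ne i j with rfl | hij
    · apply le_of_eq
      congr 1
      rw [← Complex.normSq_eq_conj_mul_self]
      simp only [Complex.ofReal_re]
      rw [hφr]
      rw [Complex.normSq_eq_norm_sq]
      ring
    · have h1 : (r i j - if i = j then E else 0) = r i j := by simp [hij]
      rw [h1]
      have h2 : ((starRingEnd ℂ) (ψ0 i) * ψ0 j).re ≤ φr i * φr j := by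
        refine (Complex.re_le_norm _).trans (le_of_eq ?_)
        rw [norm_mul, Complex.norm_conj]
      exact mul_le_mul_of_nonpos_left h2 (hoff i j hij)
  have hQge : (0:ℝ) ≤ Q := by
    have := hPSD.dotProduct_mulVec_nonneg φ
    rw [hq1, Complex.zero_le_real] at this
    exact this
  have hQ0 : Q = 0 := le_antisymm hQle hQge
  have hφM' : (M - (E : ℂ) • 1).mulVec φ = 0 := by
    refine (hPSD.dotProduct_mulVec_zero_iff φ).mp ?_
    rw [hq1, hQ0, Complex.ofReal_zero]
  have hφeig : M.mulVec φ = (E : ℂ) • φ := by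
    have := hφM'
    rw [Matrix.sub_mulVec, Matrix.smul_mulVec, Matrix.one_mulVec, sub_eq_zero] at this
    exact this
  -- spreading of zeros
  have spread : ∀ v : n → ℝ, (∀ i, 0 ≤ v i) →
      M.mulVec (fun k => (v k : ℂ)) = (E : ℂ) • (fun k => (v k : ℂ)) →
      ∀ i0' : n, v i0' = 0 → ∀ j, v j = 0 := by
    intro v hv hveig i0' h0 j
    refine hconn (fun i => v i = 0) ?_ i0' h0 j
    intro i hi j' hij' hrij'
    have he : (∑ k, r i k * v k : ℝ) = E * v i := by
      have h := congrFun hveig i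
      rw [mv' v i] at h
      have h2 : ((∑ k, r i k * v k : ℝ) : ℂ) = ((E * v i : ℝ) : ℂ) := by
        rw [h]; push_cast; simp [Pi.smul_apply, smul_eq_mul]
      exact_mod_cast h2
    rw [hi, mul_zero] at he
    have hterms : ∀ k ∈ Finset.univ, r i k * v k ≤ 0 := by
      intro k _
      rcases eq_or_ne i k with rfl | hne
      · rw [hi, mul_zero]
      · exact mul_nonpos_of_nonpos_of_nonneg (hoff i k hne) (hv k)
    have hall := (Finset.sum_eq_zero_iff_of_nonpos hterms).mp he
    have hj := hall j' (Finset.mem_univ j')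
    rcases mul_eq_zero.mp hj with h | h
    · exact absurd h hrij'
    · exact h
  have hφrnn : ∀ k, 0 ≤ φr k := fun k => norm_nonneg _
  have hφpos : ∀ j, 0 < φr j := by
    intro j
    rcases (hφrnn j).lt_or_eq with h | h
    · exact h
    · exfalso
      have hz := spread φr hφrnn hφeig j h.symm
      apply hψ0ne
      funext k
      have := hz k
      rw [hφr] at this
      simpa using norm_eq_zero.mp this
  -- every real eigenvector is a multiple of φr
  have realmult : ∀ w : n → ℝ,
      M.mulVec (fun k => (w k : ℂ)) = (E : ℂ) • (fun k => (w k : ℂ)) →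
      ∃ t : ℝ, ∀ k, w k = t * φr k := by
    intro w hw
    obtain ⟨k0, -, hk0⟩ := Finset.exists_min_image (Finset.univ : Finset n)
      (fun k => w k / φr k) ⟨Classical.arbitrary n, Finset.mem_univ _⟩
    set t := w k0 / φr k0 with ht
    set η : n → ℝ := fun k => w k - t * φr k with hη
    have hηnn : ∀ k, 0 ≤ η k := by
      intro k
      have h1 : t ≤ w k / φr k := hk0 k (Finset.mem_univ k)
      have h2 : t * φr k ≤ w k := (le_div_iff₀ (hφpos k)).mp h1
      simp only [hη]; linarith
    have hη0 : η k0 = 0 := by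
      have hne := (hφpos k0).ne'
      simp only [hη, ht]
      rw [div_mul_cancel₀ _ hne, sub_self]
    have hηeig : M.mulVec (fun k => (η k : ℂ)) = (E : ℂ) • (fun k => (η k : ℂ)) := by
      have heq : (fun k => ((η k : ℝ) : ℂ)) = (fun k => ((w k : ℝ) : ℂ)) - (t : ℂ) • φ := by
        funext k
        simp only [hη, hφ, Pi.sub_apply, Pi.smul_apply, smul_eq_mul]
        push_cast
        ring
      rw [heq, Matrix.mulVec_sub, Matrix.mulVec_smul, hw, hφeig]
      funext k
      simp only [Pi.sub_apply, Pi.smul_apply, smul_eq_mul]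
      ring
    have hηz : ∀ k, η k = 0 := spread η hηnn hηeig k0 hη0
    refine ⟨t, fun k => ?_⟩
    have := hηz k
    simp only [hη] at this
    linarith
  -- eigenspace is the span of φ
  have hφne : φ ≠ 0 := by
    intro h
    have := congrFun h (Classical.arbitrary n)
    simp only [hφ, Pi.zero_apply, Complex.ofReal_eq_zero] at this
    exact (hφpos _).ne' this
  have hspan : Module.End.eigenspace (Matrix.mulVecLin M) ((E : ℝ) : ℂ)
      = Submodule.span ℂ {φ} := by
    apply le_antisymm
    · intro ψ hψ
      rw [Module.End.mem_eigenspace_iff, Matrix.mulVecLin_apply] at hψ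
      set wr : n → ℝ := fun k => (ψ k).re with hwr
      set wi : n → ℝ := fun k => (ψ k).im with hwi
      have hentry : ∀ j, (∑ k, (r j k : ℂ) * ψ k) = (E : ℂ) * ψ j := by
        intro j
        have := congrFun hψ j
        simpa [Matrix.mulVec, dotProduct, hMr, Pi.smul_apply, smul_eq_mul] using this
      have hre : M.mulVec (fun k => (wr k : ℂ)) = (E : ℂ) • (fun k => (wr k : ℂ)) := by
        funext j
        rw [mv' wr j]
        have := congrArg Complex.re (hentry j)
        simp only [Complex.re_sum, Complex.re_ofReal_mul, Complex.mul_re,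
          Complex.ofReal_re, Complex.ofReal_im, zero_mul, sub_zero] at this
        simp only [Pi.smul_apply, smul_eq_mul]
        rw [show (∑ k, r j k * wr k) = E * wr j from this]
        push_cast
        ring
      have him : M.mulVec (fun k => (wi k : ℂ)) = (E : ℂ) • (fun k => (wi k : ℂ)) := by
        funext j
        rw [mv' wi j]
        have := congrArg Complex.im (hentry j)
        simp only [Complex.im_sum, Complex.mul_im, Complex.ofReal_re, Complex.ofReal_im,
          zero_mul, add_zero] at this
        simp only [Pi.smul_apply, smul_eq_mul]
        rw [show (∑ k, r j k * wi k) = E * wi j from this]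
        push_cast
        ring
      obtain ⟨t1, ht1⟩ := realmult wr hre
      obtain ⟨t2, ht2⟩ := realmult wi him
      have hdecomp : ψ = ((t1 : ℂ) + (t2 : ℂ) * Complex.I) • φ := by
        funext k
        simp only [Pi.smul_apply, smul_eq_mul, hφ]
        rw [← Complex.re_add_im (ψ k)]
        rw [show (ψ k).re = t1 * φr k from ht1 k, show (ψ k).im = t2 * φr k from ht2 k]
        push_cast
        ring
      rw [hdecomp]
      exact Submodule.smul_mem _ _ (Submodule.mem_span_singleton_self φ)
    · rw [Submodule.span_singleton_le_iff_mem]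
      rw [Module.End.mem_eigenspace_iff, Matrix.mulVecLin_apply]
      exact hφeig
  refine ⟨E, ⟨⟨ψ0, hψ0ne, hψ0eig⟩, hlb⟩, ?_, φ, hφeig, fun m => ⟨φr m, hφpos m, rfl⟩⟩
  rw [hspan]
  exact finrank_span_singleton hφne

lemma S1_apply (i j : Fin 2) : S1 i j = if i = j then 0 else (1/2 : ℂ) := by
  fin_cases i <;> fin_cases j <;> simp [S1]

lemma S3_apply (i j : Fin 2) :
    S3 i j = if i = j then (if i = 0 then (1/2 : ℂ) else -(1/2)) else 0 := by
  fin_cases i <;> fin_cases j <;> norm_num [S3]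

lemma prod_delta {L : ℕ} (m n : Conf L) (x' : Fin L) :
    (∏ y ∈ Finset.univ.erase x', (if m y = n y then (1 : ℂ) else 0))
      = if ∀ y, y ≠ x' → m y = n y then 1 else 0 := by
  by_cases h : ∀ y, y ≠ x' → m y = n y
  · rw [if_pos h]
    refine Finset.prod_eq_one fun y hy => ?_
    rw [if_pos (h y (Finset.mem_erase.mp hy).1)]
  · rw [if_neg h]
    push_neg at h
    obtain ⟨y, hy1, hy2⟩ := h
    refine Finset.prod_eq_zero (Finset.mem_erase.mpr ⟨hy1, Finset.mem_univ y⟩) ?_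
    rw [if_neg hy2]

lemma siteOp_S1_apply {L x : ℕ} (hx : x < L) (m n : Conf L) :
    siteOp L S1 x m n =
      if m ⟨x, hx⟩ ≠ n ⟨x, hx⟩ ∧ ∀ y, y ≠ (⟨x, hx⟩ : Fin L) → m y = n y
      then (1/2 : ℂ) else 0 := by
  simp only [siteOp]
  rw [dif_pos hx, prod_delta, S1_apply]
  by_cases h1 : m ⟨x, hx⟩ = n ⟨x, hx⟩ <;>
    by_cases h2 : ∀ y, y ≠ (⟨x, hx⟩ : Fin L) → m y = n y <;>
      simp [h1, h2]

lemma siteOp_S3_diag (L x : ℕ) :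
    ∃ d : Conf L → ℝ, siteOp L S3 x = Matrix.diagonal (fun m => (d m : ℂ)) := by
  by_cases hx : x < L
  · refine ⟨fun m => if m ⟨x, hx⟩ = 0 then 1/2 else -(1/2), ?_⟩
    ext m n
    simp only [siteOp]
    rw [dif_pos hx, prod_delta, S3_apply]
    rcases eq_or_ne m n with rfl | hmn
    · rw [Matrix.diagonal_apply_eq]
      by_cases h0 : m ⟨x, hx⟩ = 0 <;> simp [h0]
    · rw [Matrix.diagonal_apply_ne _ hmn]
      by_cases h1 : m ⟨x, hx⟩ = n ⟨x, hx⟩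
      · have hno : ¬ ∀ y, y ≠ (⟨x, hx⟩ : Fin L) → m y = n y := by
          intro hall
          apply hmn
          funext y
          by_cases hy : y = (⟨x, hx⟩ : Fin L)
          · rw [hy]; exact h1
          · exact hall y hy
        simp [h1, hno]
      · simp [h1]
  · refine ⟨fun _ => 0, ?_⟩
    ext m n
    simp [siteOp, hx, Matrix.diagonal_apply]

lemma hIsing_diag (L x : ℕ) :
    ∃ g : Conf L → ℝ, hIsing L x = Matrix.diagonal (fun m => (g m : ℂ)) := by
  obtain ⟨d1, h1⟩ := siteOp_S3_diag L x
  obtain ⟨d2, h2⟩ := siteOp_S3_diag L (x + 1)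
  refine ⟨fun m => -(d1 m * d2 m) + (1/2) * (d1 m - d2 m) + 1/4, ?_⟩
  rw [hIsing, h1, h2]
  ext m n
  rcases eq_or_ne m n with rfl | hmn
  · simp only [Matrix.diagonal_mul_diagonal, Matrix.add_apply, Matrix.neg_apply,
      Matrix.smul_apply, Matrix.sub_apply, Matrix.diagonal_apply_eq, Matrix.one_apply_eq,
      Pi.mul_apply, smul_eq_mul]
    push_cast
    ring
  · simp [Matrix.diagonal_mul_diagonal, Matrix.diagonal_apply_ne _ hmn,
      Matrix.one_apply_ne hmn]

lemma HIsing_diag (L : ℕ) :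
    ∃ g : Conf L → ℝ, HIsing L = Matrix.diagonal (fun m => (g m : ℂ)) := by
  choose gs hgs using fun x => hIsing_diag L x
  refine ⟨fun m => ∑ x ∈ Finset.range (L - 1), gs x m, ?_⟩
  rw [HIsing]
  ext m n
  rw [Matrix.sum_apply]
  rcases eq_or_ne m n with rfl | hmn
  · simp only [hgs, Matrix.diagonal_apply_eq]
    push_cast
    rfl
  · simp [hgs, Matrix.diagonal_apply_ne _ hmn]

def Mmat (a L : ℕ) (B1 B3 : ℕ → ℝ) : Matrix (Conf L) (Conf L) ℂ :=
  HIsing L + ∑ x ∈ Finset.range L,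
    ((B1 (a + x) : ℂ) • siteOp L S1 x + (B3 (a + x) : ℂ) • siteOp L S3 x)

lemma Mmat_ne (a L : ℕ) (B1 B3 : ℕ → ℝ) (m n : Conf L) (hmn : m ≠ n) :
    Mmat a L B1 B3 m n = ∑ x ∈ Finset.range L, (B1 (a + x) : ℂ) * siteOp L S1 x m n := by
  obtain ⟨g, hg⟩ := HIsing_diag L
  rw [Mmat, Matrix.add_apply, hg, Matrix.diagonal_apply_ne _ hmn, Matrix.sum_apply, zero_add]
  refine Finset.sum_congr rfl fun x hx => ?_
  obtain ⟨d, hd⟩ := siteOp_S3_diag L x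
  rw [Matrix.add_apply, Matrix.smul_apply, Matrix.smul_apply, hd,
    Matrix.diagonal_apply_ne _ hmn]
  simp [smul_eq_mul]

lemma Mmat_im (a L : ℕ) (B1 B3 : ℕ → ℝ) (m n : Conf L) : (Mmat a L B1 B3 m n).im = 0 := by
  rcases eq_or_ne m n with rfl | hmn
  · obtain ⟨g, hg⟩ := HIsing_diag L
    choose ds hds using fun x => siteOp_S3_diag L x
    rw [Mmat, Matrix.add_apply, hg, Matrix.diagonal_apply_eq, Matrix.sum_apply]
    have hterm : ∀ x ∈ Finset.range L,
        ((B1 (a + x) : ℂ) • siteOp L S1 x + (B3 (a + x) : ℂ) • siteOp L S3 x) m m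
          = ((B3 (a + x) * ds x m : ℝ) : ℂ) := by
      intro x hx
      have hxL := Finset.mem_range.mp hx
      rw [Matrix.add_apply, Matrix.smul_apply, Matrix.smul_apply, hds x,
        Matrix.diagonal_apply_eq, siteOp_S1_apply hxL, if_neg (by simp)]
      push_cast
      simp [smul_eq_mul]
    rw [Finset.sum_congr rfl hterm]
    rw [Complex.add_im, Complex.im_sum]
    simp
  · rw [Mmat_ne a L B1 B3 m n hmn, Complex.im_sum]
    refine Finset.sum_eq_zero fun x hx => ?_
    have hxL := Finset.mem_range.mp hx
    rw [siteOp_S1_apply hxL]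
    split_ifs with hc <;> simp [Complex.mul_im]

lemma Mmat_symm (a L : ℕ) (B1 B3 : ℕ → ℝ) (m n : Conf L) :
    Mmat a L B1 B3 n m = Mmat a L B1 B3 m n := by
  rcases eq_or_ne m n with rfl | hmn
  · rfl
  · rw [Mmat_ne a L B1 B3 m n hmn, Mmat_ne a L B1 B3 n m (Ne.symm hmn)]
    refine Finset.sum_congr rfl fun x hx => ?_
    have hxL := Finset.mem_range.mp hx
    rw [siteOp_S1_apply hxL, siteOp_S1_apply hxL]
    congr 1
    refine if_congr ?_ rfl rfl
    constructor
    · rintro ⟨h1, h2⟩; exact ⟨Ne.symm h1, fun y hy => (h2 y hy).symm⟩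
    · rintro ⟨h1, h2⟩; exact ⟨Ne.symm h1, fun y hy => (h2 y hy).symm⟩

lemma Mmat_flip (a L : ℕ) (B1 B3 : ℕ → ℝ) (m n : Conf L) (z : Fin L)
    (h1 : m z ≠ n z) (h2 : ∀ y, y ≠ z → m y = n y) :
    Mmat a L B1 B3 m n = ((B1 (a + (z : ℕ)) / 2 : ℝ) : ℂ) := by
  have hmn : m ≠ n := fun h => h1 (by rw [h])
  rw [Mmat_ne a L B1 B3 m n hmn]
  rw [Finset.sum_eq_single_of_mem (z : ℕ) (Finset.mem_range.mpr z.isLt)]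
  · rw [siteOp_S1_apply z.isLt, if_pos ⟨h1, h2⟩]
    push_cast
    ring
  · intro x hxr hxz
    have hxL : x < L := Finset.mem_range.mp hxr
    rw [siteOp_S1_apply hxL, if_neg, mul_zero]
    rintro ⟨hne, hall⟩
    have hzx : z ≠ (⟨x, hxL⟩ : Fin L) := by
      intro h
      exact hxz ((congrArg Fin.val h).symm)
    exact h1 (hall z hzx)


/-- Perron–Frobenius: for `1 ≤ a < b` and fields `B¹, B³ : [a,b] → ℝ`
with `B¹(x) < 0` on `[a,b]`, the operator
`H^Ising_{[a,b]} + ∑_{x=a}^b (B¹(x)S¹_x + B³(x)S³_x)` on the sub-chain `⊗_{x=a}^b ℂ²`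
(identified with `Conf (b-a+1)`, sub-site `i` being the paper's site `a+i`) has a
simple lowest eigenvalue, with an eigenvector having strictly positive components in
the standard product basis. -/
theorem ising_perron_frobenius
    (a b : ℕ) (ha : 1 ≤ a) (hab : a < b)
    (B1 B3 : ℕ → ℝ) (hB1 : ∀ x : ℕ, a ≤ x → x ≤ b → B1 x < 0) :
    ∃ E : ℝ,
      IsLeast (eigSet (HIsing (b - a + 1)
        + ∑ x ∈ Finset.range (b - a + 1),
            ((B1 (a + x) : ℂ) • siteOp (b - a + 1) S1 x
              + (B3 (a + x) : ℂ) • siteOp (b - a + 1) S3 x))) E ∧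
      Module.finrank ℂ
        (Module.End.eigenspace
          (Matrix.mulVecLin (HIsing (b - a + 1)
            + ∑ x ∈ Finset.range (b - a + 1),
                ((B1 (a + x) : ℂ) • siteOp (b - a + 1) S1 x
                  + (B3 (a + x) : ℂ) • siteOp (b - a + 1) S3 x))) ((E : ℝ) : ℂ)) = 1 ∧
      ∃ φ : Conf (b - a + 1) → ℂ,
        (HIsing (b - a + 1)
            + ∑ x ∈ Finset.range (b - a + 1),
                ((B1 (a + x) : ℂ) • siteOp (b - a + 1) S1 x
                  + (B3 (a + x) : ℂ) • siteOp (b - a + 1) S3 x)).mulVec φ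
          = (E : ℂ) • φ ∧
        ∀ m : Conf (b - a + 1), ∃ r : ℝ, 0 < r ∧ φ m = (r : ℂ) := by
  have hMgoal : HIsing (b - a + 1)
      + ∑ x ∈ Finset.range (b - a + 1),
          ((B1 (a + x) : ℂ) • siteOp (b - a + 1) S1 x
            + (B3 (a + x) : ℂ) • siteOp (b - a + 1) S3 x)
      = Mmat a (b - a + 1) B1 B3 := rfl
  rw [hMgoal]
  set L := b - a + 1 with hLdef
  have hB1x : ∀ x, x < L → B1 (a + x) < 0 := by
    intro x hx
    refine hB1 (a + x) (Nat.le_add_right a x) (by omega)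
  have hMr : ∀ m n : Conf L, Mmat a L B1 B3 m n = (((Mmat a L B1 B3 m n).re : ℝ) : ℂ) := by
    intro m n
    have him := Mmat_im a L B1 B3 m n
    apply Complex.ext
    · simp
    · simp [him]
  have hsym : ∀ m n : Conf L, (Mmat a L B1 B3 n m).re = (Mmat a L B1 B3 m n).re := by
    intro m n
    rw [Mmat_symm a L B1 B3 m n]
  have hoff : ∀ m n : Conf L, m ≠ n → (Mmat a L B1 B3 m n).re ≤ 0 := by
    intro m n hmn
    rw [Mmat_ne a L B1 B3 m n hmn, Complex.re_sum]
    refine Finset.sum_nonpos fun x hx => ?_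
    have hxL := Finset.mem_range.mp hx
    have hB := hB1x x hxL
    rw [siteOp_S1_apply hxL]
    split_ifs with hc
    · have hcast : (B1 (a + x) : ℂ) * (1/2) = ((B1 (a + x) / 2 : ℝ) : ℂ) := by
        push_cast; ring
      rw [hcast, Complex.ofReal_re]
      linarith
    · simp
  have hflipr : ∀ (m : Conf L) (z : Fin L) (c : Fin 2), c ≠ m z →
      (Mmat a L B1 B3 m (Function.update m z c)).re = B1 (a + (z : ℕ)) / 2 := by
    intro m z c hc
    have h1 : m z ≠ Function.update m z c z := by
      rw [Function.update_self]
      exact fun h => hc h.symm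
    have h2 : ∀ y, y ≠ z → m y = Function.update m z c y := by
      intro y hy
      rw [Function.update_of_ne hy]
    rw [Mmat_flip a L B1 B3 m (Function.update m z c) z h1 h2, Complex.ofReal_re]
  have hconn : ∀ P : Conf L → Prop,
      (∀ i, P i → ∀ j, i ≠ j → (Mmat a L B1 B3 i j).re ≠ 0 → P j) →
      ∀ i, P i → ∀ j, P j := by
    intro P hP i hPi j
    have claim : ∀ k (m : Conf L),
        (Finset.univ.filter fun y => m y ≠ j y).card = k → P m → P j := by
      intro k
      induction k with
      | zero =>
        intro m hc hm
        have hmj : m = j := by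
          funext y
          by_contra hy
          have hmem : y ∈ Finset.univ.filter (fun y => m y ≠ j y) := by simp [hy]
          rw [Finset.card_eq_zero] at hc
          rw [hc] at hmem
          exact absurd hmem (Finset.notMem_empty y)
        rwa [hmj] at hm
      | succ k ih =>
        intro m hc hm
        have hne : (Finset.univ.filter fun y => m y ≠ j y).Nonempty := by
          rw [← Finset.card_pos, hc]; omega
        obtain ⟨z, hz⟩ := hne
        have hzne : m z ≠ j z := (Finset.mem_filter.mp hz).2
        have hmm' : m ≠ Function.update m z (j z) := by
          intro h
          have h2 := congrFun h z
          rw [Function.update_self] at h2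
          exact hzne h2
        have hrne : (Mmat a L B1 B3 m (Function.update m z (j z))).re ≠ 0 := by
          rw [hflipr m z (j z) (fun h => hzne h.symm)]
          exact div_ne_zero (ne_of_lt (hB1x (z : ℕ) z.isLt)) two_ne_zero
        have hPm' := hP m hm (Function.update m z (j z)) hmm' hrne
        refine ih (Function.update m z (j z)) ?_ hPm'
        have hfe : (Finset.univ.filter fun y => Function.update m z (j z) y ≠ j y)
            = (Finset.univ.filter fun y => m y ≠ j y).erase z := by
          ext y
          rw [Finset.mem_erase, Finset.mem_filter, Finset.mem_filter]
          constructor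
          · rintro ⟨-, hy⟩
            by_cases hyz : y = z
            · subst hyz
              rw [Function.update_self] at hy
              exact absurd rfl hy
            · rw [Function.update_of_ne hyz] at hy
              exact ⟨hyz, Finset.mem_univ y, hy⟩
          · rintro ⟨hyz, -, hy⟩
            refine ⟨Finset.mem_univ y, ?_⟩
            rw [Function.update_of_ne hyz]
            exact hy
        rw [hfe, Finset.card_erase_of_mem hz, hc]
        omega
    exact claim _ i rfl hPi
  exact perron_general (Mmat a L B1 B3) (fun m n => (Mmat a L B1 B3 m n).re)
    hMr hsym hoff hconn
end
end
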